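/- In the alphabet-reduction construction, replacing each transition s →^{a_l} t (over alphabet Σ × {1,...,m}) in all automata by a chain s →^a (stl0) →^# (stl1) →^# ... →^# (stll) →^$ t with fresh intermediate states preserves simulation on old states: if ≼ is a simulation from B to the product A_1 ⊗ ... ⊗ A_n, then the extended relation ≼' (adding pairs of corresponding intermediate states as described) is a simulation from B' to A'_1 ⊗ ... ⊗ A'_n, and the largest simulation from B' to the primed product restricted to pairs of old states equals the largest simulation from B to the original product. -/
import Mathlib


def IsSimulation {QA QB A : Type*} (δA : QA → A → Set QA) (δB : QB → A → Set QB)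
    (R : QA → QB → Prop) : Prop :=
  ∀ p q, R p q → ∀ a, ∀ p' ∈ δA p a, ∃ q' ∈ δB q a, R p' q'

def Sim {QA QB A : Type*} (δA : QA → A → Set QA) (δB : QB → A → Set QB)
    (p : QA) (q : QB) : Prop :=
  ∃ R, IsSimulation δA δB R ∧ R p q

/-- The reduced alphabet `Σ ∪ {#, $}`. -/
inductive NewLetter (A : Type*) where
  | letter (a : A)
  | hash
  | dollar

/-- View of a partial deterministic transition function as a set-valued one. -/
def toSet {Q A : Type*} (δ : Q → A → Option Q) (q : Q) (a : A) : Set Q :=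
  {q' | δ q a = some q'}

/-- The primed automaton: every transition `s →^{(a,l)} t` is replaced by the
chain `s →^a (stl0) →^# (stl1) →^# ⋯ →^# (stll) →^$ t` through fresh
intermediate states `(s, t, l, k)` with `k ≤ l`. -/
def primeDelta {A Q : Type*} (m : ℕ) (δ : Q → A × Fin m → Option Q) :
    (Q ⊕ (Q × Q × Fin m × ℕ)) → NewLetter A → Set (Q ⊕ (Q × Q × Fin m × ℕ))
  | Sum.inl s, NewLetter.letter a =>
      {x | ∃ (t : Q) (l : Fin m), δ s (a, l) = some t ∧ x = Sum.inr (s, t, l, 0)}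
  | Sum.inr (s, t, l, k), NewLetter.hash =>
      {x | k < (l : ℕ) ∧ x = Sum.inr (s, t, l, k + 1)}
  | Sum.inr (s, t, l, k), NewLetter.dollar =>
      {x | k = (l : ℕ) ∧ x = Sum.inl t}
  | _, _ => ∅

/-- Asynchronous product of the original deterministic automata. -/
def pdeltaO {n m : ℕ} {A : Type*} {Q : Fin n → Type*}
    (δ : ∀ i, Q i → A × Fin m → Option (Q i)) (s : ∀ i, Q i) (al : A × Fin m) :
    Set (∀ i, Q i) :=
  {t | ∃ i, δ i (s i) al = some (t i) ∧ ∀ j, j ≠ i → t j = s j}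

/-- Asynchronous product of the primed automata. -/
def pdeltaP {n m : ℕ} {A : Type*} {Q : Fin n → Type*}
    (δ : ∀ i, Q i → A × Fin m → Option (Q i))
    (s : ∀ i, Q i ⊕ (Q i × Q i × Fin m × ℕ)) (a : NewLetter A) :
    Set (∀ i, Q i ⊕ (Q i × Q i × Fin m × ℕ)) :=
  {t | ∃ i, t i ∈ primeDelta m (δ i) (s i) a ∧ ∀ j, j ≠ i → t j = s j}

/-- The extension `≼'` of a relation `R` from `B` to the product: `R` itself on
(embedded) old states, together with all pairs `((stlk), u')` where
`s →^{(a,l)} t` in `B`, `v →^{(a,l)} w` in the product with the move in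
component `i`, `s R v`, `t R w`, `u'` agrees with `v` outside `i`, and
`u' i = (vᵢ wᵢ l k)` with `k ≤ l`. -/
def extRel {n m : ℕ} {A S : Type*} {Q : Fin n → Type*}
    (δB : S → A × Fin m → Option S)
    (δ : ∀ i, Q i → A × Fin m → Option (Q i))
    (R : S → (∀ i, Q i) → Prop) :
    (S ⊕ (S × S × Fin m × ℕ)) → (∀ i, Q i ⊕ (Q i × Q i × Fin m × ℕ)) → Prop :=
  fun x u' =>
    (∃ s u, x = Sum.inl s ∧ R s u ∧ ∀ i, u' i = Sum.inl (u i)) ∨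
    (∃ (s t : S) (l : Fin m) (k : ℕ) (a : A) (v w : ∀ i, Q i) (i : Fin n),
      x = Sum.inr (s, t, l, k) ∧ k ≤ (l : ℕ) ∧
      δB s (a, l) = some t ∧ R s v ∧ R t w ∧
      δ i (v i) (a, l) = some (w i) ∧ (∀ j, j ≠ i → w j = v j) ∧
      u' i = Sum.inr (v i, w i, l, k) ∧ ∀ j, j ≠ i → u' j = Sum.inl (v j))

theorem sim_isSimulation {QA QB A : Type*} (δA : QA → A → Set QA) (δB : QB → A → Set QB) :
    IsSimulation δA δB (Sim δA δB) := by
  rintro p q ⟨R, hR, hpq⟩ a p' hp'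
  obtain ⟨q', hq', h⟩ := hR p q hpq a p' hp'
  exact ⟨q', hq', R, hR, h⟩

/-- Chasing the chain of `#` transitions followed by the final `$`. -/
theorem chase {n m : ℕ} {A S : Type*} {Q : Fin n → Type*}
    (δB : S → A × Fin m → Option S)
    (δ : ∀ i, Q i → A × Fin m → Option (Q i))
    (R' : (S ⊕ (S × S × Fin m × ℕ)) → (∀ i, Q i ⊕ (Q i × Q i × Fin m × ℕ)) → Prop)
    (hR' : IsSimulation (primeDelta m δB) (pdeltaP δ) R') :
    ∀ (d : ℕ) (s t : S) (l : Fin m) (k : ℕ) (i : Fin n) (vi wi : Q i) (li : Fin m)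
      (u1 : ∀ j, Q j ⊕ (Q j × Q j × Fin m × ℕ)),
      k + d = (l : ℕ) →
      R' (Sum.inr (s, t, l, k)) u1 →
      u1 i = Sum.inr (vi, wi, li, k) →
      (∀ j, j ≠ i → ∃ x, u1 j = Sum.inl x) →
      (l : ℕ) = (li : ℕ) ∧ ∃ u2, R' (Sum.inl t) u2 ∧ u2 i = Sum.inl wi ∧
        ∀ j, j ≠ i → u2 j = u1 j := by
  intro d
  induction d with
  | zero =>
    intro s t l k i vi wi li u1 hkl hR hui hinl
    have hstep : Sum.inl t ∈ primeDelta m δB (Sum.inr (s, t, l, k)) NewLetter.dollar := by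
      simp [primeDelta]
      omega
    obtain ⟨u2, ⟨j, hj, hfix⟩, hR2⟩ := hR' _ _ hR _ _ hstep
    have hji : j = i := by
      by_contra h
      obtain ⟨x, hx⟩ := hinl j h
      rw [hx] at hj
      simp [primeDelta] at hj
    subst hji
    rw [hui] at hj
    simp only [primeDelta, Set.mem_setOf_eq] at hj
    obtain ⟨hkli, hu2⟩ := hj
    exact ⟨by omega, u2, hR2, hu2, hfix⟩
  | succ d ih =>
    intro s t l k i vi wi li u1 hkl hR hui hinl
    have hstep : Sum.inr (s, t, l, k + 1) ∈
        primeDelta m δB (Sum.inr (s, t, l, k)) NewLetter.hash := by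
      simp [primeDelta]
      omega
    obtain ⟨u1', ⟨j, hj, hfix⟩, hR1⟩ := hR' _ _ hR _ _ hstep
    have hji : j = i := by
      by_contra h
      obtain ⟨x, hx⟩ := hinl j h
      rw [hx] at hj
      simp [primeDelta] at hj
    subst hji
    rw [hui] at hj
    simp only [primeDelta, Set.mem_setOf_eq] at hj
    obtain ⟨hklt, hu1'⟩ := hj
    obtain ⟨hle, u2, h1, h2, h3⟩ := ih s t l (k + 1) _ vi wi li u1' (by omega) hR1 hu1'
      (fun j hj => by rw [hfix j hj]; exact hinl j hj)
    exact ⟨hle, u2, h1, h2, fun j hj => by rw [h3 j hj, hfix j hj]⟩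

/-- The alphabet-reduction construction preserves simulation on old states:
any simulation `≼` from `B` to `A₁ ⊗ ⋯ ⊗ Aₙ` extends to a simulation `≼'` from
`B'` to `A'₁ ⊗ ⋯ ⊗ A'ₙ`, and the largest simulation between the primed automata
restricted to pairs of old states coincides with the largest simulation between
the original ones. -/
theorem alphabet_reduction_preserves_simulation {n m : ℕ} {A S : Type*}
    {Q : Fin n → Type*}
    (δB : S → A × Fin m → Option S)
    (δ : ∀ i, Q i → A × Fin m → Option (Q i)) :
    (∀ R : S → (∀ i, Q i) → Prop,
      IsSimulation (toSet δB) (pdeltaO δ) R →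
      IsSimulation (primeDelta m δB) (pdeltaP δ) (extRel δB δ R)) ∧
    (∀ (s : S) (u : ∀ i, Q i),
      Sim (primeDelta m δB) (pdeltaP δ)
          (Sum.inl s) (fun i => Sum.inl (u i)) ↔
      Sim (toSet δB) (pdeltaO δ) s u) := by
  have part1 : ∀ R : S → (∀ i, Q i) → Prop,
      IsSimulation (toSet δB) (pdeltaO δ) R →
      IsSimulation (primeDelta m δB) (pdeltaP δ) (extRel δB δ R) := by
    intro R hR x u' hrel a p' hp'
    rcases hrel with ⟨s, u, hx, hsu, hu'⟩ |
      ⟨s, t, l, k, a0, v, w, i, hx, hkl, hδB, hRv, hRw, hδi, hwv, hu'i, hu'j⟩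
    · subst hx
      cases a with
      | letter b =>
        simp only [primeDelta, Set.mem_setOf_eq] at hp'
        obtain ⟨t, l, hδ, rfl⟩ := hp'
        obtain ⟨u'', hmem, hRt⟩ := hR s u hsu (b, l) t hδ
        obtain ⟨i, hδi, hfix⟩ := hmem
        refine ⟨Function.update u' i (Sum.inr (u i, u'' i, l, 0)), ⟨i, ?_, ?_⟩, ?_⟩
        · rw [Function.update_self, hu' i]
          simp only [primeDelta, Set.mem_setOf_eq]
          exact ⟨u'' i, l, hδi, rfl⟩
        · intro j hj; exact Function.update_of_ne hj _ _
        · right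
          refine ⟨s, t, l, 0, b, u, u'', i, rfl, Nat.zero_le _, hδ, hsu, hRt, hδi, hfix,
            Function.update_self .., fun j hj => ?_⟩
          rw [Function.update_of_ne hj, hu' j]
      | hash => simp [primeDelta] at hp'
      | dollar => simp [primeDelta] at hp'
    · subst hx
      cases a with
      | letter b => simp [primeDelta] at hp'
      | hash =>
        simp only [primeDelta, Set.mem_setOf_eq] at hp'
        obtain ⟨hklt, rfl⟩ := hp'
        refine ⟨Function.update u' i (Sum.inr (v i, w i, l, k + 1)),
          ⟨i, ?_, fun j hj => Function.update_of_ne hj _ _⟩, ?_⟩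
        · rw [Function.update_self, hu'i]
          simp [primeDelta]
          omega
        · right
          refine ⟨s, t, l, k + 1, a0, v, w, i, rfl, by omega, hδB, hRv, hRw, hδi, hwv,
            Function.update_self .., fun j hj => ?_⟩
          rw [Function.update_of_ne hj]
          exact hu'j j hj
      | dollar =>
        simp only [primeDelta, Set.mem_setOf_eq] at hp'
        obtain ⟨hkeq, rfl⟩ := hp'
        refine ⟨Function.update u' i (Sum.inl (w i)),
          ⟨i, ?_, fun j hj => Function.update_of_ne hj _ _⟩, ?_⟩
        · rw [Function.update_self, hu'i]
          simp [primeDelta]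
          omega
        · left
          refine ⟨t, w, rfl, hRw, fun j => ?_⟩
          rcases eq_or_ne j i with rfl | hj
          · exact Function.update_self ..
          · rw [Function.update_of_ne hj, hu'j j hj, hwv j hj]
  refine ⟨part1, fun s u => ⟨?_, ?_⟩⟩
  · rintro ⟨R', hR', hsu⟩
    refine ⟨fun p q => R' (Sum.inl p) (fun i => Sum.inl (q i)), ?_, hsu⟩
    rintro p q hpq ⟨b, l⟩ t ht
    have ht' : δB p (b, l) = some t := ht
    have hstep : Sum.inr (p, t, l, 0) ∈
        primeDelta m δB (Sum.inl p) (NewLetter.letter b) := by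
      simp only [primeDelta, Set.mem_setOf_eq]
      exact ⟨t, l, ht', rfl⟩
    obtain ⟨u1, ⟨i, hi, hfix⟩, hR1⟩ := hR' _ _ hpq _ _ hstep
    simp only [primeDelta, Set.mem_setOf_eq] at hi
    obtain ⟨ti, li, hδi, hui⟩ := hi
    obtain ⟨hlli, u2, hRt, hu2i, hu2j⟩ := chase δB δ R' hR' (l : ℕ) p t l 0 i (q i) ti li u1
      (by omega) hR1 hui (fun j hj => ⟨q j, hfix j hj⟩)
    have hlle : li = l := Fin.ext hlli.symm
    subst hlle
    refine ⟨Function.update q i ti, ⟨i, ?_, fun j hj => Function.update_of_ne hj _ _⟩, ?_⟩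
    · rw [Function.update_self]; exact hδi
    · have hequ : (fun j => Sum.inl (Function.update q i ti j)) = u2 := by
        funext j
        rcases eq_or_ne j i with rfl | hj
        · rw [Function.update_self, hu2i]
        · rw [Function.update_of_ne hj, hu2j j hj, hfix j hj]
      show R' (Sum.inl t) fun j => Sum.inl (Function.update q i ti j)
      rw [hequ]
      exact hRt
  · rintro ⟨R, hR, hsu⟩
    exact ⟨extRel δB δ R, part1 R hR, Or.inl ⟨s, u, rfl, hsu, fun i => rfl⟩⟩
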